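/- Let H ∈ ℝ^{n×n} be symmetric positive semidefinite, G, D, V ∈ ℝ^{n×m}, ρ > 0, and define W = (H + ρI)^{-1}(G - V + ρD), D⁺ = P_k(W + V/ρ) (a best k-sparse Frobenius approximation of W + V/ρ), and V⁺ = V + ρ(W - D⁺). If ‖D‖_0 ≤ k, then ‖V⁺‖_F ≤ ‖G - H D‖_F + ‖H V‖_F / ρ. -/

import Mathlib

open scoped Classical

/-- Frobenius norm of a real matrix. -/
noncomputable def frob {n m : ℕ} (A : Matrix (Fin n) (Fin m) ℝ) : ℝ :=
  Real.sqrt (∑ i, ∑ j, (A i j) ^ 2)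

/-- Spectral norm (operator 2-norm, largest singular value) of a real matrix. -/
noncomputable def spec {n m : ℕ} (A : Matrix (Fin n) (Fin m) ℝ) : ℝ :=
  ‖LinearMap.toContinuousLinearMap (Matrix.toEuclideanLin A)‖

/-- Number of nonzero entries of a matrix (the ℓ₀-"norm"). -/
noncomputable def l0 {n m : ℕ} (A : Matrix (Fin n) (Fin m) ℝ) : ℕ :=
  (Finset.univ.filter fun p : Fin n × Fin m => A p.1 p.2 ≠ 0).card

/-- Auxiliary: view a matrix as a Euclidean vector. -/
noncomputable def toE {n m : ℕ} (A : Matrix (Fin n) (Fin m) ℝ) :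
    EuclideanSpace ℝ (Fin n × Fin m) := WithLp.toLp 2 (fun p : Fin n × Fin m => A p.1 p.2)

lemma frob_eq_norm {n m : ℕ} (A : Matrix (Fin n) (Fin m) ℝ) : frob A = ‖toE A‖ := by
  rw [EuclideanSpace.norm_eq, frob]
  congr 1
  rw [Fintype.sum_prod_type]
  simp [toE, sq_abs]

lemma frob_smul {n m : ℕ} (c : ℝ) (A : Matrix (Fin n) (Fin m) ℝ) :
    frob (c • A) = |c| * frob A := by
  rw [frob_eq_norm, frob_eq_norm]
  have h : toE (c • A) = c • toE A := rfl
  rw [h, norm_smul, Real.norm_eq_abs]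

lemma frob_neg {n m : ℕ} (A : Matrix (Fin n) (Fin m) ℝ) : frob (-A) = frob A := by
  rw [frob_eq_norm, frob_eq_norm]
  have h : toE (-A) = -toE A := rfl
  rw [h, norm_neg]

lemma frob_sub_le {n m : ℕ} (A B : Matrix (Fin n) (Fin m) ℝ) :
    frob (A - B) ≤ frob A + frob B := by
  rw [frob_eq_norm, frob_eq_norm, frob_eq_norm]
  have h : toE (A - B) = toE A - toE B := rfl
  rw [h]
  exact norm_sub_le _ _

lemma cross_nonneg {n m : ℕ} {H : Matrix (Fin n) (Fin n) ℝ} (hH : H.PosSemidef)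
    (M : Matrix (Fin n) (Fin m) ℝ) :
    0 ≤ ∑ i, ∑ j, (H * M) i j * M i j := by
  rw [Finset.sum_comm]
  apply Finset.sum_nonneg
  intro j _
  have h := hH.dotProduct_mulVec_nonneg (fun i => M i j)
  have he : (∑ x, M x j * ∑ l, H x l * M l j) = ∑ i, (H * M) i j * M i j :=
    Finset.sum_congr rfl (fun i _ => by rw [Matrix.mul_apply]; ring)
  rw [← he]
  simpa [dotProduct, Matrix.mulVec] using h

lemma frob_key {n m : ℕ} {H : Matrix (Fin n) (Fin n) ℝ} (hH : H.PosSemidef)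
    {ρ : ℝ} (hρ : 0 < ρ) (M : Matrix (Fin n) (Fin m) ℝ) :
    ρ * frob M ≤ frob (H * M + ρ • M) := by
  unfold frob
  rw [show ρ * Real.sqrt (∑ i, ∑ j, (M i j) ^ 2)
      = Real.sqrt (ρ ^ 2 * ∑ i, ∑ j, (M i j) ^ 2) by
    rw [Real.sqrt_mul (sq_nonneg ρ), Real.sqrt_sq hρ.le]]
  apply Real.sqrt_le_sqrt
  have hexp : ∀ i j, ((H * M + ρ • M) i j) ^ 2
      = ((H * M) i j) ^ 2 + (2 * ρ) * ((H * M) i j * M i j) + ρ ^ 2 * (M i j) ^ 2 := by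
    intro i j
    simp only [Matrix.add_apply, Matrix.smul_apply, smul_eq_mul]
    ring
  simp_rw [hexp, Finset.sum_add_distrib, ← Finset.mul_sum]
  have hA : 0 ≤ ∑ i, ∑ j, ((H * M) i j) ^ 2 := by positivity
  have hC := cross_nonneg hH M
  nlinarith [mul_nonneg (by linarith : (0:ℝ) ≤ 2 * ρ) hC]

/-- first conclusion of Lemma 1 of the ALPS paper. -/
theorem alps_lemma1_V_bound {n m k : ℕ} (H : Matrix (Fin n) (Fin n) ℝ)
    (hH : H.PosSemidef) (G D V : Matrix (Fin n) (Fin m) ℝ)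
    (ρ : ℝ) (hρ : 0 < ρ) (hD : l0 D ≤ k)
    (W Dplus Vplus : Matrix (Fin n) (Fin m) ℝ)
    (hWdef : W = (H + ρ • 1)⁻¹ * (G - V + ρ • D))
    (hDplus_sparse : l0 Dplus ≤ k)
    (hDplus_best : ∀ B : Matrix (Fin n) (Fin m) ℝ, l0 B ≤ k →
      frob (Dplus - (W + ρ⁻¹ • V)) ≤ frob (B - (W + ρ⁻¹ • V)))
    (hVplus : Vplus = V + ρ • (W - Dplus)) :
    frob Vplus ≤ frob (G - H * D) + frob (H * V) / ρ := by
  set A : Matrix (Fin n) (Fin n) ℝ := H + ρ • 1 with hA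
  have hone : (ρ • (1 : Matrix (Fin n) (Fin n) ℝ)).PosDef := by
    rw [Matrix.smul_one_eq_diagonal]
    exact Matrix.PosDef.diagonal (fun _ => hρ)
  have hApd : A.PosDef := Matrix.PosDef.posSemidef_add hH hone
  have hUdet : IsUnit A.det := (Matrix.isUnit_iff_isUnit_det A).mp hApd.isUnit
  have hAW : A * W = G - V + ρ • D := by
    rw [hWdef, ← Matrix.mul_assoc, Matrix.mul_nonsing_inv _ hUdet, Matrix.one_mul]
  set M : Matrix (Fin n) (Fin m) ℝ := ρ • D - ρ • W - V with hM
  have hAM : H * M + ρ • M = ρ • (H * D - G) - H * V := by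
    have h1 : H * M + ρ • M = A * M := by
      rw [hA, Matrix.add_mul, Matrix.smul_mul, Matrix.one_mul]
    rw [h1, hM, Matrix.mul_sub, Matrix.mul_sub, Matrix.mul_smul, Matrix.mul_smul, hAW]
    have h2 : A * D = H * D + ρ • D := by
      rw [hA, Matrix.add_mul, Matrix.smul_mul, Matrix.one_mul]
    have h3 : A * V = H * V + ρ • V := by
      rw [hA, Matrix.add_mul, Matrix.smul_mul, Matrix.one_mul]
    rw [h2, h3]
    module
  -- Step 1: frob Vplus = ρ * frob (Dplus - (W + ρ⁻¹ • V))
  have hstep1 : frob Vplus = ρ * frob (Dplus - (W + ρ⁻¹ • V)) := by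
    have hV' : Vplus = -(ρ • (Dplus - (W + ρ⁻¹ • V))) := by
      rw [hVplus]
      have hk : ρ • (Dplus - (W + ρ⁻¹ • V)) = ρ • Dplus - ρ • W - V := by
        ext i j
        simp only [Matrix.smul_apply, Matrix.sub_apply, Matrix.add_apply, smul_eq_mul]
        field_simp
        ring
      rw [hk]
      module
    rw [hV', frob_neg, frob_smul, abs_of_pos hρ]
  -- Step 2: use the best approximation property
  have hstep2 : frob Vplus ≤ frob M := by
    rw [hstep1]
    have hb := hDplus_best D hD
    have : ρ * frob (D - (W + ρ⁻¹ • V)) = frob M := by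
      have hk : ρ • (D - (W + ρ⁻¹ • V)) = ρ • D - ρ • W - V := by
        ext i j
        simp only [Matrix.smul_apply, Matrix.sub_apply, Matrix.add_apply, smul_eq_mul]
        field_simp
        ring
      rw [hM, ← hk, frob_smul, abs_of_pos hρ]
    calc ρ * frob (Dplus - (W + ρ⁻¹ • V)) ≤ ρ * frob (D - (W + ρ⁻¹ • V)) :=
          mul_le_mul_of_nonneg_left hb hρ.le
      _ = frob M := this
  -- Step 3: ρ * frob M ≤ ρ * frob (G - H*D) + frob (H*V)
  have hstep3 : ρ * frob M ≤ ρ * frob (G - H * D) + frob (H * V) := by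
    calc ρ * frob M ≤ frob (H * M + ρ • M) := frob_key hH hρ M
      _ = frob (ρ • (H * D - G) - H * V) := by rw [hAM]
      _ ≤ frob (ρ • (H * D - G)) + frob (H * V) := frob_sub_le _ _
      _ = ρ * frob (H * D - G) + frob (H * V) := by rw [frob_smul, abs_of_pos hρ]
      _ = ρ * frob (G - H * D) + frob (H * V) := by
          rw [show H * D - G = -(G - H * D) by module, frob_neg]
  -- Combine
  have hfinal : frob M ≤ frob (G - H * D) + frob (H * V) / ρ := by
    rw [← mul_le_mul_iff_right₀ hρ]
    calc ρ * frob M ≤ ρ * frob (G - H * D) + frob (H * V) := hstep3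
      _ = ρ * (frob (G - H * D) + frob (H * V) / ρ) := by
        rw [mul_add, mul_div_cancel₀ _ hρ.ne']
  linarith
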